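/- Consider the planar predator–prey system ẋ = x(r·g(x) − q·y), ẏ = y(c·q·x − μ − m·y) (system (2.1) with n = 1). Assume μ/(c·q) < K and that the limit lim_{x→0⁺}(x·g'(x) + g(x)) exists and is positive. Then the system is uniformly persistent: there exists ε > 0 such that every solution (x(t), y(t)) defined for all t ≥ 0 with x(0) > 0 and y(0) > 0 satisfies liminf_{t→∞} min(x(t), y(t)) > ε. -/

import Mathlib

open Filter Set

noncomputable def phiF (a u : ℝ) : ℝ := u - a - a * (Real.log u - Real.log a)

lemma phiF_self (a : ℝ) : phiF a a = 0 := by simp [phiF]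

lemma phiF_sq_le {a u : ℝ} (ha : 0 < a) (hu : 0 < u) :
    (Real.sqrt u - Real.sqrt a) ^ 2 ≤ phiF a u := by
  have h1 : Real.log u - Real.log a = 2 * Real.log (Real.sqrt u / Real.sqrt a) := by
    rw [Real.log_div (by positivity) (by positivity), Real.log_sqrt hu.le, Real.log_sqrt ha.le]
    ring
  have h2 : Real.log (Real.sqrt u / Real.sqrt a) ≤ Real.sqrt u / Real.sqrt a - 1 :=
    Real.log_le_sub_one_of_pos (by positivity)
  have hsa : (0:ℝ) < Real.sqrt a := Real.sqrt_pos.2 ha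
  have hqa : Real.sqrt a ^ 2 = a := Real.sq_sqrt ha.le
  have hqu : Real.sqrt u ^ 2 = u := Real.sq_sqrt hu.le
  have hd : a * (Real.sqrt u / Real.sqrt a) = Real.sqrt a * Real.sqrt u := by
    rw [mul_div_assoc']
    rw [div_eq_iff hsa.ne']
    linear_combination (-Real.sqrt u) * hqa
  have h3 : a * (Real.log u - Real.log a) ≤ 2 * (Real.sqrt a * Real.sqrt u) - 2 * a := by
    rw [h1]
    nlinarith [mul_le_mul_of_nonneg_left h2 ha.le]
  simp only [phiF]
  nlinarith

lemma phiF_nonneg {a u : ℝ} (ha : 0 < a) (hu : 0 < u) : 0 ≤ phiF a u :=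
  le_trans (sq_nonneg _) (phiF_sq_le ha hu)

lemma phiF_pos {a u : ℝ} (ha : 0 < a) (hu : 0 < u) (hne : u ≠ a) : 0 < phiF a u := by
  refine lt_of_lt_of_le ?_ (phiF_sq_le ha hu)
  have : Real.sqrt u ≠ Real.sqrt a := fun hh => hne ((Real.sqrt_inj hu.le ha.le).1 hh)
  exact pow_two_pos_of_ne_zero (sub_ne_zero.2 this)

lemma phiF_upper {a u B : ℝ} (ha : 0 < a) (hu : 0 < u) (hB : phiF a u ≤ B) :
    u ≤ (Real.sqrt a + Real.sqrt B) ^ 2 := by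
  have h1 := phiF_sq_le ha hu
  have hB0 : 0 ≤ B := le_trans (le_trans (sq_nonneg _) h1) hB
  have hqB : Real.sqrt B ^ 2 = B := Real.sq_sqrt hB0
  have hqu : Real.sqrt u ^ 2 = u := Real.sq_sqrt hu.le
  have hqa : Real.sqrt a ^ 2 = a := Real.sq_sqrt ha.le
  have h5 : Real.sqrt u - Real.sqrt a ≤ Real.sqrt B := by
    nlinarith [h1.trans hB, Real.sqrt_nonneg B]
  have h6 : Real.sqrt u ≤ Real.sqrt a + Real.sqrt B := by linarith
  calc u = Real.sqrt u ^ 2 := hqu.symm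
    _ ≤ (Real.sqrt a + Real.sqrt B) ^ 2 := by
        have h7 : (0:ℝ) ≤ Real.sqrt u := Real.sqrt_nonneg u
        nlinarith

lemma phiF_lower {a u B : ℝ} (ha : 0 < a) (hu : 0 < u) (hB : phiF a u ≤ B) :
    a * Real.exp (-((B + a) / a)) ≤ u := by
  have key : a * (Real.log a - Real.log u) ≤ B + a := by
    have h0 : u - a - a * (Real.log u - Real.log a) ≤ B := hB
    nlinarith
  have h1 : Real.log a - Real.log u ≤ (B + a) / a := by
    rw [le_div_iff₀ ha]; nlinarith
  have h2 : a / u ≤ Real.exp ((B + a) / a) :=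
    (Real.log_le_iff_le_exp (by positivity)).1 (by rwa [Real.log_div ha.ne' hu.ne'])
  have h3 : a ≤ u * Real.exp ((B + a) / a) := by
    rw [div_le_iff₀ hu] at h2; linarith
  calc a * Real.exp (-((B + a) / a))
      ≤ (u * Real.exp ((B + a) / a)) * Real.exp (-((B + a) / a)) :=
        mul_le_mul_of_nonneg_right h3 (Real.exp_pos _).le
    _ = u := by rw [mul_assoc, ← Real.exp_add]; simp

lemma phiF_anti {a u v : ℝ} (ha : 0 < a) (hu : 0 < u) (huv : u ≤ v) (hva : v ≤ a) :
    phiF a v ≤ phiF a u := by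
  have hv : 0 < v := lt_of_lt_of_le hu huv
  have hlog : Real.log u - Real.log v ≤ u / v - 1 := by
    rw [← Real.log_div hu.ne' hv.ne']
    exact Real.log_le_sub_one_of_pos (by positivity)
  have hlog' : v * (Real.log u - Real.log v) ≤ u - v := by
    have := mul_le_mul_of_nonneg_left hlog hv.le
    calc v * (Real.log u - Real.log v) ≤ v * (u / v - 1) := this
      _ = u - v := by field_simp
  have hmono : Real.log u ≤ Real.log v := Real.log_le_log hu huv
  have h2 : v * (Real.log v - Real.log u) ≤ a * (Real.log v - Real.log u) :=
    mul_le_mul_of_nonneg_right hva (sub_nonneg.2 hmono)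
  simp only [phiF]
  linarith

lemma ode_pos (x h : ℝ → ℝ)
    (hx : ∀ t ≥ (0:ℝ), HasDerivAt x (x t * h t) t)
    (hbd : ∀ s > (0:ℝ), ∃ C, ∀ t ∈ Set.Icc (0:ℝ) s, 0 < x t → -C ≤ h t)
    (h0 : 0 < x 0) : ∀ t ≥ (0:ℝ), 0 < x t := by
  by_contra hcon
  push_neg at hcon
  obtain ⟨t1, ht1, hxt1⟩ := hcon
  have hxc : ∀ t ≥ (0:ℝ), ContinuousAt x t := fun t ht => (hx t ht).continuousAt
  have ht1pos : 0 < t1 := by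
    rcases eq_or_lt_of_le ht1 with h | h
    · exact absurd (h ▸ h0) (not_lt.2 hxt1)
    · exact h
  set Z := Set.Icc 0 t1 ∩ x ⁻¹' Set.Iic 0 with hZ
  have hZclosed : IsClosed Z := by
    refine ContinuousOn.preimage_isClosed_of_isClosed ?_ isClosed_Icc isClosed_Iic
    exact fun t ht => (hxc t ht.1).continuousWithinAt
  have hZne : Z.Nonempty := ⟨t1, ⟨le_of_lt ht1pos, le_refl t1⟩, hxt1⟩
  have hZbdd : BddBelow Z := ⟨0, fun t ht => ht.1.1⟩
  set s := sInf Z with hs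
  have hsZ : s ∈ Z := hZclosed.csInf_mem hZne hZbdd
  have hs0 : 0 ≤ s := hsZ.1.1
  have hst1 : s ≤ t1 := hsZ.1.2
  have hslb : ∀ t ∈ Z, s ≤ t := fun t ht => csInf_le hZbdd ht
  have hbefore : ∀ t, 0 ≤ t → t < s → 0 < x t := by
    intro t ht hts
    by_contra hneg
    push_neg at hneg
    exact absurd (hslb t ⟨⟨ht, le_of_lt (lt_of_lt_of_le hts hst1)⟩, hneg⟩) (not_le.2 hts)
  have hspos : 0 < s := by
    rcases eq_or_lt_of_le hs0 with h | h
    · exact absurd (h ▸ hsZ.2 : x 0 ≤ 0) (not_le.2 h0)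
    · exact h
  have hxs0 : x s = 0 := by
    have hxsle : x s ≤ 0 := hsZ.2
    rcases eq_or_lt_of_le hxsle with h | h
    · exact h
    · exfalso
      have hev : ∀ᶠ u in nhds s, x u < 0 := (hxc s hs0).eventually (Filter.Tendsto.eventually_lt_const h tendsto_id)
      have hev2 : ∀ᶠ u in nhds s, 0 < u := Filter.Tendsto.eventually_const_lt hspos tendsto_id
      have hev3 : ∀ᶠ u in nhdsWithin s (Set.Iio s), x u < 0 ∧ 0 < u ∧ u < s := by
        filter_upwards [(hev.and hev2).filter_mono nhdsWithin_le_nhds,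
          self_mem_nhdsWithin] with u hu hu2
        exact ⟨hu.1, hu.2, hu2⟩
      obtain ⟨u, hxu, hu0, hus⟩ := hev3.exists
      have huZ : u ∈ Z := ⟨⟨le_of_lt hu0, le_of_lt (lt_of_lt_of_le hus hst1)⟩, le_of_lt hxu⟩
      exact absurd (hslb u huZ) (not_le.2 hus)
  -- bound
  obtain ⟨C, hC⟩ := hbd s hspos
  set D := max C 0 + 1 with hD
  set φ := fun t => x t * Real.exp (D * t) with hφ
  have hφd : ∀ t ∈ Set.Icc (0:ℝ) s, HasDerivAt φ
      (x t * h t * Real.exp (D * t) + x t * (Real.exp (D * t) * D)) t := by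
    intro t ht
    have he : HasDerivAt (fun y : ℝ => Real.exp (D * y)) (Real.exp (D * t) * D) t := by
      have h2 : HasDerivAt (fun y : ℝ => D * y) D t := by
        simpa using (hasDerivAt_id t).const_mul D
      exact (Real.hasDerivAt_exp (D * t)).comp t h2
    exact (hx t ht.1).mul he
  have hmono : MonotoneOn φ (Set.Icc 0 s) := by
    refine monotoneOn_of_deriv_nonneg (convex_Icc 0 s) ?_ ?_ ?_
    · exact fun t ht => ((hφd t ht).continuousAt).continuousWithinAt
    · rw [interior_Icc]
      exact fun t ht => ((hφd t ⟨le_of_lt ht.1, le_of_lt ht.2⟩).differentiableAt).differentiableWithinAt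
    · rw [interior_Icc]
      intro t ht
      rw [(hφd t ⟨le_of_lt ht.1, le_of_lt ht.2⟩).deriv]
      have hxt : 0 < x t := hbefore t (le_of_lt ht.1) ht.2
      have hht : -C ≤ h t := hC t ⟨le_of_lt ht.1, le_of_lt ht.2⟩ hxt
      have hDge : h t + D ≥ 1 := by
        have : C ≤ max C 0 := le_max_left _ _
        simp only [hD]; linarith
      have hexp : 0 < Real.exp (D * t) := Real.exp_pos _
      have key : 0 < x t * Real.exp (D * t) := mul_pos hxt hexp
      nlinarith [key, mul_le_mul_of_nonneg_left (by linarith : (1:ℝ) ≤ h t + D) key.le]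
  have h01 : φ 0 ≤ φ s := hmono ⟨le_refl 0, hs0⟩ ⟨hs0, le_refl s⟩ hs0
  have hφ0 : φ 0 = x 0 := by simp [hφ]
  have hφs : φ s = 0 := by simp [hφ, hxs0]
  rw [hφ0, hφs] at h01
  exact absurd h01 (not_le.2 h0)
set_option maxHeartbeats 2000000 in
theorem statement0
    (r K c q μ m : ℝ) (hr : 0 < r) (hK : 0 < K) (hc : 0 < c) (hq : 0 < q)
    (hμ : 0 < μ) (hm : 0 < m)
    (g g' : ℝ → ℝ)
    (hg : ∀ x > (0:ℝ), HasDerivAt g (g' x) x)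
    (hg' : ∀ x > (0:ℝ), g' x < 0)
    (hgK : g K = 0)
    (hthr : μ / (c * q) < K)
    (β : ℝ) (hβ : 0 < β)
    (hlim : Tendsto (fun x => x * g' x + g x) (nhdsWithin 0 (Set.Ioi 0)) (nhds β)) :
    ∃ ε > (0:ℝ), ∀ x y : ℝ → ℝ,
      (∀ t ≥ (0:ℝ), HasDerivAt x (x t * (r * g (x t) - q * y t)) t) →
      (∀ t ≥ (0:ℝ), HasDerivAt y (y t * (c * q * x t - μ - m * y t)) t) →
      0 < x 0 → 0 < y 0 →
      ε < Filter.liminf (fun t => min (x t) (y t)) atTop := by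
  have hcq : 0 < c * q := mul_pos hc hq
  have hμK : μ < c * q * K := by
    have := (div_lt_iff₀ hcq).1 hthr; linarith
  have hgc : ContinuousOn g (Set.Ioi 0) := fun z hz => (hg z hz).continuousAt.continuousWithinAt
  have hganti : StrictAntiOn g (Set.Ioi 0) := by
    refine strictAntiOn_of_deriv_neg (convex_Ioi 0) hgc ?_
    rw [interior_Ioi]
    intro z hz
    rw [(hg z hz).deriv]
    exact hg' z hz
  have hgle : ∀ u v : ℝ, 0 < u → u ≤ v → g v ≤ g u := by
    intro u v hu huv
    rcases eq_or_lt_of_le huv with h | h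
    · exact le_of_eq (by rw [h])
    · exact le_of_lt (hganti (Set.mem_Ioi.2 hu) (Set.mem_Ioi.2 (lt_trans hu h)) h)
  set a0 := μ / (c * q) with ha0
  have ha0pos : 0 < a0 := div_pos hμ hcq
  have hga0 : 0 < g a0 := by
    have := hganti (Set.mem_Ioi.2 ha0pos) (Set.mem_Ioi.2 hK) hthr
    rwa [hgK] at this
  -- equilibrium
  set F := fun z : ℝ => c * q * z - μ - m * (r * g z / q) with hF
  have hFa : F a0 < 0 := by
    have h1 : c * q * a0 - μ = 0 := by rw [ha0]; field_simp; ring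
    have h2 : 0 < m * (r * g a0 / q) := mul_pos hm (div_pos (mul_pos hr hga0) hq)
    show c * q * a0 - μ - m * (r * g a0 / q) < 0
    linarith
  have hFK : 0 < F K := by
    show 0 < c * q * K - μ - m * (r * g K / q)
    rw [hgK]
    have : m * (r * 0 / q) = 0 := by ring
    rw [this]
    linarith
  have hFc : ContinuousOn F (Set.Icc a0 K) := by
    have hsub : Set.Icc a0 K ⊆ Set.Ioi 0 := fun z hz => lt_of_lt_of_le ha0pos hz.1
    exact ((continuousOn_const.mul continuousOn_id).sub continuousOn_const).sub
      (continuousOn_const.mul ((continuousOn_const.mul (hgc.mono hsub)).div_const q))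
  obtain ⟨xs, hxsI, hFxs⟩ := intermediate_value_Ioo (le_of_lt hthr) hFc ⟨hFa, hFK⟩
  have hxs0 : 0 < xs := lt_trans ha0pos hxsI.1
  have hxsK : xs < K := hxsI.2
  have hgxs : 0 < g xs := by
    have := hganti (Set.mem_Ioi.2 hxs0) (Set.mem_Ioi.2 hK) hxsK
    rwa [hgK] at this
  have heqx0 : c * q * xs - μ - m * (r * g xs / q) = 0 := hFxs
  set ys := r * g xs / q with hys
  have hys0 : 0 < ys := div_pos (mul_pos hr hgxs) hq
  have heqy : q * ys = r * g xs := by rw [hys]; field_simp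
  have heqx : c * q * xs - μ - m * ys = 0 := heqx0
  -- threshold values
  set ε' := min xs ys / 2 with hε'def
  have hminpos : 0 < min xs ys := lt_min hxs0 hys0
  have hε'pos : 0 < ε' := by rw [hε'def]; linarith
  have hε'x : ε' < xs := by
    have h1 : min xs ys ≤ xs := min_le_left _ _
    rw [hε'def]; linarith
  have hε'y : ε' < ys := by
    have h1 : min xs ys ≤ ys := min_le_right _ _
    rw [hε'def]; linarith
  set V1 := min (c * phiF xs ε') (phiF ys ε') with hV1def
  have hV1pos : 0 < V1 :=
    lt_min (mul_pos hc (phiF_pos hxs0 hε'pos (ne_of_lt hε'x))) (phiF_pos hys0 hε'pos (ne_of_lt hε'y))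
  refine ⟨ε' / 2, by linarith, ?_⟩
  intro x y hx hy hx0 hy0
  -- positivity of solutions
  have hbdx : ∀ s > (0:ℝ), ∃ C, ∀ t ∈ Set.Icc (0:ℝ) s, 0 < x t → -C ≤ r * g (x t) - q * y t := by
    intro s hs
    have hcx : ContinuousOn x (Set.Icc 0 s) := fun t ht => ((hx t ht.1).continuousAt).continuousWithinAt
    have hcy : ContinuousOn y (Set.Icc 0 s) := fun t ht => ((hy t ht.1).continuousAt).continuousWithinAt
    obtain ⟨Mx, hMx⟩ := isCompact_Icc.exists_bound_of_continuousOn hcx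
    obtain ⟨My, hMy⟩ := isCompact_Icc.exists_bound_of_continuousOn hcy
    set M := max Mx 1 with hM
    have hMpos : (0:ℝ) < M := lt_of_lt_of_le one_pos (le_max_right _ _)
    refine ⟨r * |g M| + q * |My|, ?_⟩
    intro t ht hxt
    have hxM : x t ≤ M := by
      have h1 : |x t| ≤ Mx := by simpa [Real.norm_eq_abs] using hMx t ht
      have := le_abs_self (x t)
      have := le_max_left Mx 1
      linarith
    have hgb : g M ≤ g (x t) := hgle (x t) M hxt hxM
    have hyb : y t ≤ |My| := by
      have h1 : |y t| ≤ My := by simpa [Real.norm_eq_abs] using hMy t ht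
      have := le_abs_self (y t)
      have := le_abs_self My
      linarith
    have f1 : r * g M ≤ r * g (x t) := mul_le_mul_of_nonneg_left hgb hr.le
    have f2 : -|g M| ≤ g M := neg_abs_le _
    have f3 : r * -|g M| ≤ r * g M := mul_le_mul_of_nonneg_left f2 hr.le
    have f4 : q * y t ≤ q * |My| := mul_le_mul_of_nonneg_left hyb hq.le
    nlinarith
  have hbdy : ∀ s > (0:ℝ), ∃ C, ∀ t ∈ Set.Icc (0:ℝ) s, 0 < y t → -C ≤ c * q * x t - μ - m * y t := by
    intro s hs
    have hcx : ContinuousOn x (Set.Icc 0 s) := fun t ht => ((hx t ht.1).continuousAt).continuousWithinAt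
    have hcy : ContinuousOn y (Set.Icc 0 s) := fun t ht => ((hy t ht.1).continuousAt).continuousWithinAt
    obtain ⟨Mx, hMx⟩ := isCompact_Icc.exists_bound_of_continuousOn hcx
    obtain ⟨My, hMy⟩ := isCompact_Icc.exists_bound_of_continuousOn hcy
    refine ⟨c * q * |Mx| + μ + m * |My|, ?_⟩
    intro t ht _
    have h1 : |x t| ≤ Mx := by simpa [Real.norm_eq_abs] using hMx t ht
    have h2 : |y t| ≤ My := by simpa [Real.norm_eq_abs] using hMy t ht
    have h3 : -|Mx| ≤ x t := by
      have := neg_abs_le (x t)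
      have := le_abs_self Mx
      linarith [abs_nonneg (x t)]
    have h4 : y t ≤ |My| := by
      have := le_abs_self (y t)
      have := le_abs_self My
      linarith
    have f1 : c * q * -|Mx| ≤ c * q * x t := mul_le_mul_of_nonneg_left h3 hcq.le
    have f2 : m * y t ≤ m * |My| := mul_le_mul_of_nonneg_left h4 hm.le
    nlinarith
  have hxpos : ∀ t ≥ (0:ℝ), 0 < x t := ode_pos x (fun t => r * g (x t) - q * y t) hx hbdx hx0
  have hypos : ∀ t ≥ (0:ℝ), 0 < y t := ode_pos y (fun t => c * q * x t - μ - m * y t) hy hbdy hy0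
  -- Lyapunov function along the trajectory
  set Vt := fun t => c * phiF xs (x t) + phiF ys (y t) with hVt
  set Wt := fun t => c * r * (x t - xs) * (g (x t) - g xs) - m * (y t - ys) ^ 2 with hWt
  have hVd : ∀ t ≥ (0:ℝ), HasDerivAt Vt (Wt t) t := by
    intro t ht
    have hxt := hxpos t ht
    have hyt := hypos t ht
    have hdx : HasDerivAt (fun u => Real.log (x u))
        ((x t)⁻¹ * (x t * (r * g (x t) - q * y t))) t :=
      (Real.hasDerivAt_log hxt.ne').comp t (hx t ht)
    have hdy : HasDerivAt (fun u => Real.log (y u))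
        ((y t)⁻¹ * (y t * (c * q * x t - μ - m * y t))) t :=
      (Real.hasDerivAt_log hyt.ne').comp t (hy t ht)
    have hd1 : HasDerivAt (fun u => c * (x u - xs - xs * (Real.log (x u) - Real.log xs)))
        (c * (x t * (r * g (x t) - q * y t) -
          xs * ((x t)⁻¹ * (x t * (r * g (x t) - q * y t))))) t :=
      (((hx t ht).sub_const xs).sub ((hdx.sub_const (Real.log xs)).const_mul xs)).const_mul c
    have hd2 : HasDerivAt (fun u => y u - ys - ys * (Real.log (y u) - Real.log ys))
        (y t * (c * q * x t - μ - m * y t) -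
          ys * ((y t)⁻¹ * (y t * (c * q * x t - μ - m * y t)))) t :=
      ((hy t ht).sub_const ys).sub ((hdy.sub_const (Real.log ys)).const_mul ys)
    have hsum := hd1.add hd2
    have hfun : Vt = fun u => c * (x u - xs - xs * (Real.log (x u) - Real.log xs)) +
        (y u - ys - ys * (Real.log (y u) - Real.log ys)) := by
      funext u; simp only [hVt, phiF]
    rw [hfun]
    convert hsum using 1
    · rfl
    · rfl
    · rfl
    rw [inv_mul_cancel_left₀ hxt.ne', inv_mul_cancel_left₀ hyt.ne']
    simp only [hWt]
    linear_combination c * (x t - xs) * heqy - (y t - ys) * heqx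
  have hprod : ∀ u : ℝ, 0 < u → (u - xs) * (g u - g xs) ≤ 0 := by
    intro u hu
    rcases lt_trichotomy u xs with h | h | h
    · have := hganti (Set.mem_Ioi.2 hu) (Set.mem_Ioi.2 hxs0) h
      nlinarith
    · simp [h]
    · have := hganti (Set.mem_Ioi.2 hxs0) (Set.mem_Ioi.2 hu) h
      nlinarith
  have hprods : ∀ u : ℝ, 0 < u → u ≠ xs → (u - xs) * (g u - g xs) < 0 := by
    intro u hu hne
    rcases lt_or_gt_of_ne hne with h | h
    · have := hganti (Set.mem_Ioi.2 hu) (Set.mem_Ioi.2 hxs0) h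
      nlinarith
    · have := hganti (Set.mem_Ioi.2 hxs0) (Set.mem_Ioi.2 hu) h
      nlinarith
  have hWle : ∀ t ≥ (0:ℝ), Wt t ≤ 0 := by
    intro t ht
    have h1 := hprod (x t) (hxpos t ht)
    have f1 : c * r * ((x t - xs) * (g (x t) - g xs)) ≤ 0 :=
      mul_nonpos_of_nonneg_of_nonpos (mul_pos hc hr).le h1
    have f2 : 0 ≤ m * (y t - ys) ^ 2 := mul_nonneg hm.le (sq_nonneg _)
    simp only [hWt]
    nlinarith
  have hVcont : ContinuousOn Vt (Set.Ici 0) := fun t ht => ((hVd t ht).continuousAt).continuousWithinAt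
  have hVanti : AntitoneOn Vt (Set.Ici 0) := by
    refine antitoneOn_of_deriv_nonpos (convex_Ici 0) hVcont ?_ ?_
    · rw [interior_Ici]
      exact fun t ht => ((hVd t (le_of_lt ht)).differentiableAt).differentiableWithinAt
    · rw [interior_Ici]
      intro t ht
      rw [(hVd t (le_of_lt ht)).deriv]
      exact hWle t (le_of_lt ht)
  have hVnonneg : ∀ t ≥ (0:ℝ), 0 ≤ Vt t := fun t ht =>
    add_nonneg (mul_nonneg hc.le (phiF_nonneg hxs0 (hxpos t ht))) (phiF_nonneg hys0 (hypos t ht))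
  set B := Vt 0 with hB
  have hBnonneg : 0 ≤ B := hVnonneg 0 le_rfl
  have hVleB : ∀ t ≥ (0:ℝ), Vt t ≤ B := fun t ht => hVanti Set.self_mem_Ici ht ht
  -- trajectory confined to a compact box
  set a1 := xs * Real.exp (-((B / c + xs) / xs)) with ha1
  set a2 := (Real.sqrt xs + Real.sqrt (B / c)) ^ 2 with ha2
  set b1 := ys * Real.exp (-((B + ys) / ys)) with hb1
  set b2 := (Real.sqrt ys + Real.sqrt B) ^ 2 with hb2
  have ha1pos : 0 < a1 := mul_pos hxs0 (Real.exp_pos _)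
  have hb1pos : 0 < b1 := mul_pos hys0 (Real.exp_pos _)
  have hbox : ∀ t ≥ (0:ℝ), x t ∈ Set.Icc a1 a2 ∧ y t ∈ Set.Icc b1 b2 := by
    intro t ht
    have hxt := hxpos t ht
    have hyt := hypos t ht
    have h1 : c * phiF xs (x t) + phiF ys (y t) ≤ B := hVleB t ht
    have hpx : 0 ≤ phiF xs (x t) := phiF_nonneg hxs0 hxt
    have hpy : 0 ≤ phiF ys (y t) := phiF_nonneg hys0 hyt
    have h2 : phiF xs (x t) ≤ B / c := by
      rw [le_div_iff₀ hc]; nlinarith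
    have h3 : phiF ys (y t) ≤ B := by nlinarith
    exact ⟨⟨phiF_lower hxs0 hxt h2, phiF_upper hxs0 hxt h2⟩,
      ⟨phiF_lower hys0 hyt h3, phiF_upper hys0 hyt h3⟩⟩
  -- eventually V drops below V1
  have hev : ∃ t0, 0 ≤ t0 ∧ Vt t0 < V1 := by
    by_contra hcon
    push_neg at hcon
    set box : Set (ℝ × ℝ) := Set.Icc a1 a2 ×ˢ Set.Icc b1 b2 with hboxdef
    set Vf := fun p : ℝ × ℝ => c * phiF xs p.1 + phiF ys p.2 with hVf
    set Wf := fun p : ℝ × ℝ => c * r * (p.1 - xs) * (g p.1 - g xs) - m * (p.2 - ys) ^ 2 with hWf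
    have hbox1 : ∀ p : ℝ × ℝ, p ∈ box → 0 < p.1 := fun p hp => lt_of_lt_of_le ha1pos hp.1.1
    have hbox2 : ∀ p : ℝ × ℝ, p ∈ box → 0 < p.2 := fun p hp => lt_of_lt_of_le hb1pos hp.2.1
    have hlog1 : ContinuousOn (fun p : ℝ × ℝ => Real.log p.1) box := fun p hp =>
      ((Real.continuousAt_log (ne_of_gt (hbox1 p hp))).comp continuous_fst.continuousAt).continuousWithinAt
    have hlog2 : ContinuousOn (fun p : ℝ × ℝ => Real.log p.2) box := fun p hp =>
      ((Real.continuousAt_log (ne_of_gt (hbox2 p hp))).comp continuous_snd.continuousAt).continuousWithinAt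
    have hVfc : ContinuousOn Vf box := by
      have : Vf = fun p : ℝ × ℝ => c * (p.1 - xs - xs * (Real.log p.1 - Real.log xs)) +
          (p.2 - ys - ys * (Real.log p.2 - Real.log ys)) := by
        funext p; simp only [hVf, phiF]
      rw [this]
      exact (continuousOn_const.mul ((continuous_fst.continuousOn.sub continuousOn_const).sub
        (continuousOn_const.mul (hlog1.sub continuousOn_const)))).add
        ((continuous_snd.continuousOn.sub continuousOn_const).sub
        (continuousOn_const.mul (hlog2.sub continuousOn_const)))
    have hgfst : ContinuousOn (fun p : ℝ × ℝ => g p.1) box := fun p hp =>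
      ((hgc.continuousAt (isOpen_Ioi.mem_nhds (hbox1 p hp))).comp continuous_fst.continuousAt).continuousWithinAt
    have hWfc : ContinuousOn Wf box := by
      exact ((continuousOn_const.mul (continuous_fst.continuousOn.sub continuousOn_const)).mul
        (hgfst.sub continuousOn_const)).sub
        (continuousOn_const.mul ((continuous_snd.continuousOn.sub continuousOn_const).pow 2))
    set A := box ∩ Vf ⁻¹' Set.Ici V1 with hA
    have hAclosed : IsClosed A :=
      hVfc.preimage_isClosed_of_isClosed (isClosed_Icc.prod isClosed_Icc) isClosed_Ici
    have hAcomp : IsCompact A :=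
      (isCompact_Icc.prod isCompact_Icc).of_isClosed_subset hAclosed Set.inter_subset_left
    have htrajA : ∀ t ≥ (0:ℝ), (x t, y t) ∈ A := by
      intro t ht
      refine ⟨⟨(hbox t ht).1, (hbox t ht).2⟩, ?_⟩
      exact hcon t ht
    have hAne : A.Nonempty := ⟨(x 0, y 0), htrajA 0 le_rfl⟩
    obtain ⟨p0, hp0A, hp0max⟩ := hAcomp.exists_isMaxOn hAne (hWfc.mono Set.inter_subset_left)
    have hp0x : 0 < p0.1 := hbox1 p0 hp0A.1
    have hδ : Wf p0 < 0 := by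
      by_cases hpx : p0.1 = xs
      · by_cases hpy : p0.2 = ys
        · exfalso
          have hz : Vf p0 = 0 := by
            simp only [hVf, hpx, hpy, phiF_self]; ring
          have h2 : V1 ≤ Vf p0 := hp0A.2
          rw [hz] at h2
          linarith
        · have h2 : 0 < m * (p0.2 - ys) ^ 2 :=
            mul_pos hm (pow_two_pos_of_ne_zero (sub_ne_zero.2 hpy))
          simp only [hWf, hpx]
          nlinarith
      · have h1 := hprods p0.1 hp0x hpx
        have f1 : c * r * ((p0.1 - xs) * (g p0.1 - g xs)) < 0 :=
          mul_neg_of_pos_of_neg (mul_pos hc hr) h1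
        have f2 : 0 ≤ m * (p0.2 - ys) ^ 2 := mul_nonneg hm.le (sq_nonneg _)
        simp only [hWf]
        nlinarith
    set δ := -Wf p0 with hδdef
    have hδpos : 0 < δ := by rw [hδdef]; linarith
    have hWub : ∀ t ≥ (0:ℝ), Wt t ≤ -δ := by
      intro t ht
      have h2 : Wf (x t, y t) ≤ Wf p0 := hp0max (htrajA t ht)
      have h3 : Wt t = Wf (x t, y t) := by simp only [hWt, hWf]
      rw [h3, hδdef]
      linarith
    set ψ := fun t => Vt t + δ * t with hψ
    have hψanti : AntitoneOn ψ (Set.Ici 0) := by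
      refine antitoneOn_of_deriv_nonpos (convex_Ici 0) ?_ ?_ ?_
      · exact hVcont.add ((continuous_const.mul continuous_id).continuousOn)
      · rw [interior_Ici]
        intro t ht
        exact (((hVd t (le_of_lt ht)).add ((hasDerivAt_id t).const_mul δ)).differentiableAt).differentiableWithinAt
      · rw [interior_Ici]
        intro t ht
        have hd : HasDerivAt ψ (Wt t + δ * 1) t := (hVd t (le_of_lt ht)).add ((hasDerivAt_id t).const_mul δ)
        rw [hd.deriv]
        have := hWub t (le_of_lt ht)
        linarith
    set T := (B + 1) / δ with hT
    have hTpos : 0 < T := div_pos (by linarith) hδpos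
    have hψle : ψ T ≤ ψ 0 := hψanti Set.self_mem_Ici (Set.mem_Ici.2 hTpos.le) hTpos.le
    have hψ0 : ψ 0 = B := by simp [hψ, hB]
    have hδT : δ * T = B + 1 := by rw [hT]; field_simp
    have hVT : 0 ≤ Vt T := hVnonneg T hTpos.le
    have hψT : ψ T = Vt T + δ * T := rfl
    rw [hψ0, hψT, hδT] at hψle
    linarith
  obtain ⟨t0, ht0, hVt0⟩ := hev
  have hfinal : ∀ t ≥ t0, ε' ≤ min (x t) (y t) := by
    intro t ht
    have ht' : (0:ℝ) ≤ t := le_trans ht0 ht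
    have hVle2 : Vt t ≤ Vt t0 := hVanti (Set.mem_Ici.2 ht0) (Set.mem_Ici.2 ht') ht
    have hVlt : Vt t < V1 := lt_of_le_of_lt hVle2 hVt0
    have hxt := hxpos t ht'
    have hyt := hypos t ht'
    have hVtval : Vt t = c * phiF xs (x t) + phiF ys (y t) := rfl
    have hxgt : ε' ≤ x t := by
      by_contra hcc
      push_neg at hcc
      have h1 : phiF xs ε' ≤ phiF xs (x t) := phiF_anti hxs0 hxt hcc.le hε'x.le
      have h2 : V1 ≤ c * phiF xs ε' := min_le_left _ _
      have h3 := phiF_nonneg hys0 hyt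
      have h4 := mul_le_mul_of_nonneg_left h1 hc.le
      rw [hVtval] at hVlt
      linarith
    have hygt : ε' ≤ y t := by
      by_contra hcc
      push_neg at hcc
      have h1 : phiF ys ε' ≤ phiF ys (y t) := phiF_anti hys0 hyt hcc.le hε'y.le
      have h2 : V1 ≤ phiF ys ε' := min_le_right _ _
      have h3 : 0 ≤ c * phiF xs (x t) := mul_nonneg hc.le (phiF_nonneg hxs0 hxt)
      rw [hVtval] at hVlt
      linarith
    exact le_min hxgt hygt
  have hevent : ∀ᶠ t in atTop, ε' ≤ min (x t) (y t) := eventually_atTop.2 ⟨t0, hfinal⟩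
  have hbdd : IsBoundedUnder (· ≤ ·) atTop (fun t => min (x t) (y t)) :=
    ⟨a2, eventually_map.2 (eventually_atTop.2 ⟨0, fun t ht => le_trans (min_le_left _ _) (hbox t ht).1.2⟩)⟩
  have hlim2 : ε' ≤ Filter.liminf (fun t => min (x t) (y t)) atTop :=
    Filter.le_liminf_of_le hbdd.isCoboundedUnder_ge hevent
  linarith
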